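/- Let p, p′, a, a′ : ℤ → [0,1]. Then the quantum walks U_{p,a} := U_{p,a,0,0} and U_{p′,a′} := U_{p′,a′,0,0} are unitarily equivalent if and only if p = p′ and a = a′. -/

import Mathlib

noncomputable section

/-- `H = ⊕_{x∈ℤ} H_x`, the ℓ² direct sum with each `H_x` a copy of `ℂ²`. -/
abbrev H : Type := lp (fun _ : ℤ × Fin 2 => ℂ) 2

/-- The canonical orthonormal basis vector `eᵢˣ` of `H_x` viewed in `H`. -/
def e (x : ℤ) (i : Fin 2) : H := lp.single 2 (x, i) 1

/-- The subspace `H_x` of `H`. -/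
def Hx (x : ℤ) : Submodule ℂ H := Submodule.span ℂ {e x 0, e x 1}

/-- The rank-one operator `|u⟩⟨v| : w ↦ ⟨v, w⟩ u`. -/
def ketbra (u v : H) : H →L[ℂ] H := ((innerSL ℂ) v).smulRight u

/-- The orthogonal projection of `H` onto `H_x`. -/
def P (x : ℤ) : H →L[ℂ] H := ketbra (e x 0) (e x 0) + ketbra (e x 1) (e x 1)

/-- A unitary (linear isometric equivalence) viewed as a continuous linear map. -/
def clm (U : H ≃ₗᵢ[ℂ] H) : H →L[ℂ] H := U.toLinearIsometry.toContinuousLinearMap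

/-- `{u, v}` is an orthonormal basis of the two dimensional space `H_x`. -/
def ONBx (x : ℤ) (u v : H) : Prop :=
  u ∈ Hx x ∧ v ∈ Hx x ∧ ‖u‖ = 1 ∧ ‖v‖ = 1 ∧ (inner ℂ u v : ℂ) = 0

/-- The SSQW conditions: `U H_x ⊆ H_{x-1} ⊕ H_x ⊕ H_{x+1}` and
`rank(P_{x±1} U P_x) ≤ 1` for all `x`. -/
def SSQW (U : H ≃ₗᵢ[ℂ] H) : Prop :=
  (∀ x : ℤ, ∀ ψ ∈ Hx x, U ψ ∈ Hx (x - 1) ⊔ Hx x ⊔ Hx (x + 1)) ∧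
  (∀ x : ℤ, LinearMap.rank (((P (x + 1)).comp ((clm U).comp (P x))).toLinearMap) ≤ 1) ∧
  (∀ x : ℤ, LinearMap.rank (((P (x - 1)).comp ((clm U).comp (P x))).toLinearMap) ≤ 1)

/-- Unitary equivalence of quantum walks: conjugation by a unitary `W`
preserving every `H_x`. -/
def UnitEquiv (U U' : H ≃ₗᵢ[ℂ] H) : Prop :=
  ∃ W : H ≃ₗᵢ[ℂ] H,
    (∀ x : ℤ, (Hx x).map (W.toLinearEquiv : H →ₗ[ℂ] H) = Hx x) ∧
    U' = (W.symm.trans U).trans W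

/-- `V` is the quantum walk `U_{p,r,θ,κ}`: with `q_x = √(1-p_x²)` and
`s_x = √(1-r_x²)`, it sends `e^{iκ_x} r_x e₁ˣ + s_x e₂ˣ` to
`e^{iθ_x} p_x e₁ˣ + q_x e₂^{x+1}`, and `s_x e₁ˣ − e^{−iκ_x} r_x e₂ˣ` to
`q_{x−1} e₁^{x−1} − e^{−iθ_{x−1}} p_{x−1} e₂ˣ`, for every `x ∈ ℤ`. -/
def IsUprtk (p r θ κ : ℤ → ℝ) (V : H ≃ₗᵢ[ℂ] H) : Prop :=
  ∀ x : ℤ,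
    V ((Complex.exp (Complex.I * (κ x : ℂ)) * (r x : ℂ)) • e x 0
        + (Real.sqrt (1 - (r x) ^ 2) : ℂ) • e x 1)
      = (Complex.exp (Complex.I * (θ x : ℂ)) * (p x : ℂ)) • e x 0
        + (Real.sqrt (1 - (p x) ^ 2) : ℂ) • e (x + 1) 1 ∧
    V ((Real.sqrt (1 - (r x) ^ 2) : ℂ) • e x 0
        - (Complex.exp (-(Complex.I * (κ x : ℂ))) * (r x : ℂ)) • e x 1)
      = (Real.sqrt (1 - (p (x - 1)) ^ 2) : ℂ) • e (x - 1) 0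
        - (Complex.exp (-(Complex.I * (θ (x - 1) : ℂ))) * (p (x - 1) : ℂ)) • e x 1

local notation "⟪" x ", " y "⟫" => (inner ℂ x y : ℂ)

lemma inner_ee (x y : ℤ) (i : Fin 2) (j : Fin 2) :
    ⟪e x i, e y j⟫ = if x = y ∧ i = j then 1 else 0 := by
  rw [e, e, lp.inner_single_left, lp.single_apply]
  by_cases h : (x, i) = (y, j)
  · obtain ⟨h1, h2⟩ := Prod.mk.injEq .. ▸ h
    simp [h1, h2]
  · have : ¬ (x = y ∧ i = j) := by simpa [Prod.ext_iff] using h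
    rw [Pi.single_apply, if_neg h, if_neg this]
    simp

lemma e_mem (x : ℤ) (i : Fin 2) : e x i ∈ Hx x := by
  fin_cases i
  · exact Submodule.subset_span (Set.mem_insert _ _)
  · exact Submodule.subset_span (Set.mem_insert_of_mem _ rfl)

lemma mem_Hx_iff {ψ : H} {x : ℤ} : ψ ∈ Hx x ↔ ∃ c d : ℂ, ψ = c • e x 0 + d • e x 1 := by
  rw [Hx, Submodule.mem_span_pair]
  exact ⟨fun ⟨c, d, h⟩ => ⟨c, d, h.symm⟩, fun ⟨c, d, h⟩ => ⟨c, d, h.symm⟩⟩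

lemma hV_clean {p r : ℤ → ℝ} {V : H ≃ₗᵢ[ℂ] H}
    (hV : IsUprtk p r (fun _ => 0) (fun _ => 0) V) (x : ℤ) :
    V ((r x : ℂ) • e x 0 + (Real.sqrt (1 - r x ^ 2) : ℂ) • e x 1)
      = (p x : ℂ) • e x 0 + (Real.sqrt (1 - p x ^ 2) : ℂ) • e (x + 1) 1 ∧
    V ((Real.sqrt (1 - r x ^ 2) : ℂ) • e x 0 - (r x : ℂ) • e x 1)
      = (Real.sqrt (1 - p (x - 1) ^ 2) : ℂ) • e (x - 1) 0 - (p (x - 1) : ℂ) • e x 1 := by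
  have h := hV x
  simpa only [Complex.ofReal_zero, mul_zero, neg_zero, Complex.exp_zero, one_mul] using h

lemma rs_sq {r : ℤ → ℝ} (hr : ∀ x, r x ∈ Set.Icc (0:ℝ) 1) (x : ℤ) :
    ((r x : ℂ)) * (r x : ℂ) + (Real.sqrt (1 - r x ^ 2) : ℂ) * (Real.sqrt (1 - r x ^ 2) : ℂ) = 1 := by
  have h0 : (0:ℝ) ≤ 1 - r x ^ 2 := by nlinarith [(hr x).1, (hr x).2]
  have h : r x * r x + Real.sqrt (1 - r x ^ 2) * Real.sqrt (1 - r x ^ 2) = 1 := by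
    rw [Real.mul_self_sqrt h0]; ring
  calc ((r x : ℂ)) * (r x : ℂ) + (Real.sqrt (1 - r x ^ 2) : ℂ) * (Real.sqrt (1 - r x ^ 2) : ℂ)
      = ((r x * r x + Real.sqrt (1 - r x ^ 2) * Real.sqrt (1 - r x ^ 2) : ℝ) : ℂ) := by push_cast; ring
    _ = 1 := by rw [h]; norm_num

lemma V_combo {p r : ℤ → ℝ} {V : H ≃ₗᵢ[ℂ] H}
    (hV : IsUprtk p r (fun _ => 0) (fun _ => 0) V)
    (hr : ∀ x, r x ∈ Set.Icc (0:ℝ) 1) (x : ℤ) (a b : ℂ) :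
    V (a • e x 0 + b • e x 1)
      = ((a * (Real.sqrt (1 - r x ^ 2) : ℂ) - b * (r x : ℂ)) * (Real.sqrt (1 - p (x-1) ^ 2) : ℂ)) • e (x-1) 0
        + ((a * (r x : ℂ) + b * (Real.sqrt (1 - r x ^ 2) : ℂ)) * (p x : ℂ)) • e x 0
        - ((a * (Real.sqrt (1 - r x ^ 2) : ℂ) - b * (r x : ℂ)) * (p (x-1) : ℂ)) • e x 1
        + ((a * (r x : ℂ) + b * (Real.sqrt (1 - r x ^ 2) : ℂ)) * (Real.sqrt (1 - p x ^ 2) : ℂ)) • e (x+1) 1 := by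
  have hrs := rs_sq hr x
  set R : ℂ := (r x : ℂ)
  set S : ℂ := (Real.sqrt (1 - r x ^ 2) : ℂ)
  have key : a • e x 0 + b • e x 1
      = (a * R + b * S) • (R • e x 0 + S • e x 1) + (a * S - b * R) • (S • e x 0 - R • e x 1) := by
    match_scalars
    · linear_combination (-a) * hrs
    · linear_combination (-b) * hrs
  rw [key, map_add, map_smul, map_smul, (hV_clean hV x).1, (hV_clean hV x).2]
  module

lemma rot_normSq (a b : ℂ) (r s : ℝ) (h : r^2 + s^2 = 1) :
    Complex.normSq (a * (r:ℂ) + b * (s:ℂ)) + Complex.normSq (a * (s:ℂ) - b * (r:ℂ))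
      = Complex.normSq a + Complex.normSq b := by
  simp only [Complex.normSq_apply, Complex.add_re, Complex.add_im, Complex.sub_re,
    Complex.sub_im, Complex.mul_re, Complex.mul_im, Complex.ofReal_re, Complex.ofReal_im]
  nlinarith [h]

lemma normSq_coords {c d : ℂ} {x : ℤ} {ψ : H} (hψ : ψ = c • e x 0 + d • e x 1)
    (h1 : ⟪ψ, ψ⟫ = 1) : Complex.normSq c + Complex.normSq d = 1 := by
  rw [hψ] at h1
  simp only [inner_add_left, inner_add_right, inner_smul_left, inner_smul_right, inner_ee] at h1
  simp only [and_self, if_true, Fin.zero_eq_one_iff, Fin.one_eq_zero_iff] at h1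
  norm_num at h1
  have : ((Complex.normSq c + Complex.normSq d : ℝ) : ℂ) = 1 := by
    rw [Complex.ofReal_add, ← Complex.mul_conj, ← Complex.mul_conj]
    linear_combination h1
  exact_mod_cast this


lemma inner_self_combo (c d : ℂ) (x : ℤ) :
    ⟪c • e x 0 + d • e x 1, c • e x 0 + d • e x 1⟫
      = (starRingEnd ℂ) c * c + (starRingEnd ℂ) d * d := by
  simp only [inner_add_left, inner_add_right, inner_smul_left, inner_smul_right, inner_ee]
  norm_num
  ring

set_option maxHeartbeats 1000000 in
/-- Main one-sided bound: `q'_x ≤ q_x`. -/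
lemma qle (p a p' a' : ℤ → ℝ)
    (hp : ∀ x : ℤ, p x ∈ Set.Icc (0 : ℝ) 1) (hp' : ∀ x : ℤ, p' x ∈ Set.Icc (0 : ℝ) 1)
    (ha : ∀ x : ℤ, a x ∈ Set.Icc (0 : ℝ) 1) (ha' : ∀ x : ℤ, a' x ∈ Set.Icc (0 : ℝ) 1)
    (V V' W : H ≃ₗᵢ[ℂ] H)
    (hV : IsUprtk p a (fun _ => 0) (fun _ => 0) V)
    (hV' : IsUprtk p' a' (fun _ => 0) (fun _ => 0) V')
    (hWsymm : ∀ x : ℤ, ∀ ψ ∈ Hx x, W.symm ψ ∈ Hx x)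
    (hE : ∀ ψ : H, V' ψ = W (V (W.symm ψ)))
    (x : ℤ) : Real.sqrt (1 - p' x ^ 2) ≤ Real.sqrt (1 - p x ^ 2) := by
  set u' : H := (a' x : ℂ) • e x 0 + (Real.sqrt (1 - a' x ^ 2) : ℂ) • e x 1 with hu'def
  have hu'mem : u' ∈ Hx x :=
    Submodule.add_mem _ (Submodule.smul_mem _ _ (e_mem x 0)) (Submodule.smul_mem _ _ (e_mem x 1))
  obtain ⟨aa, bb, hφ⟩ := mem_Hx_iff.1 (hWsymm x u' hu'mem)
  obtain ⟨g0, g1, hg⟩ := mem_Hx_iff.1 (hWsymm (x+1) (e (x+1) 1) (e_mem _ _))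
  -- E1
  have E1 : V (W.symm u') = (p' x : ℂ) • W.symm (e x 0)
      + (Real.sqrt (1 - p' x ^ 2) : ℂ) • W.symm (e (x + 1) 1) := by
    have h := (hV_clean hV' x).1
    rw [hE] at h
    have h2 := congrArg W.symm h
    rw [LinearIsometryEquiv.symm_apply_apply] at h2
    rw [h2, map_add, map_smul, map_smul]
  rw [hφ, V_combo hV ha x aa bb] at E1
  -- inner with W.symm (e (x+1) 1)
  have hinner := congrArg (fun z => ⟪W.symm (e (x+1) 1), z⟫) E1
  have hne1 : x + 1 ≠ x - 1 := by omega
  have hne2 : x + 1 ≠ x := by omega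
  simp only [inner_add_left, inner_add_right, inner_sub_right, inner_smul_left, inner_smul_right,
    LinearIsometryEquiv.inner_map_map] at hinner
  rw [hg] at hinner
  simp only [inner_add_left, inner_add_right, inner_sub_right, inner_smul_left, inner_smul_right,
    inner_ee, hne1, hne2] at hinner
  norm_num at hinner
  have h1 : ⟪W.symm u', W.symm u'⟫ = 1 := by
    rw [LinearIsometryEquiv.inner_map_map, hu'def, inner_self_combo]
    simp only [Complex.conj_ofReal]
    exact rs_sq ha' x
  have hab := normSq_coords hφ h1
  have hg1 : ⟪W.symm (e (x+1) 1), W.symm (e (x+1) 1)⟫ = 1 := by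
    rw [LinearIsometryEquiv.inner_map_map, inner_ee]; simp
  have hgn := normSq_coords hg hg1
  have hsq : a x ^ 2 + (Real.sqrt (1 - a x ^ 2))^2 = 1 := by
    rw [Real.sq_sqrt (by nlinarith [(ha x).1, (ha x).2])]; ring
  have hcd := rot_normSq aa bb (a x) (Real.sqrt (1 - a x ^ 2)) hsq
  rw [hab] at hcd
  have hns := congrArg Complex.normSq hinner
  simp only [Complex.normSq_mul, Complex.normSq_conj, Complex.normSq_ofReal] at hns
  have n1 := Complex.normSq_nonneg (aa * (a x : ℂ) + bb * (Real.sqrt (1 - a x ^ 2) : ℂ))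
  have n2 := Complex.normSq_nonneg (aa * (Real.sqrt (1 - a x ^ 2) : ℂ) - bb * (a x : ℂ))
  have n3 := Complex.normSq_nonneg g1
  have n4 := Complex.normSq_nonneg g0
  have q0 := Real.sqrt_nonneg (1 - p x ^ 2)
  have q0' := Real.sqrt_nonneg (1 - p' x ^ 2)
  have hN1 : Complex.normSq (aa * (a x : ℂ) + bb * (Real.sqrt (1 - a x ^ 2) : ℂ)) ≤ 1 := by
    linarith
  have hN3 : Complex.normSq g1 ≤ 1 := by linarith
  have hQQ : Real.sqrt (1 - p' x ^ 2) * Real.sqrt (1 - p' x ^ 2)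
      ≤ Real.sqrt (1 - p x ^ 2) * Real.sqrt (1 - p x ^ 2) := by
    have hQ2 : (0:ℝ) ≤ Real.sqrt (1 - p x ^ 2) * Real.sqrt (1 - p x ^ 2) := mul_nonneg q0 q0
    calc Real.sqrt (1 - p' x ^ 2) * Real.sqrt (1 - p' x ^ 2)
        = Complex.normSq (aa * (a x : ℂ) + bb * (Real.sqrt (1 - a x ^ 2) : ℂ))
            * (Real.sqrt (1 - p x ^ 2) * Real.sqrt (1 - p x ^ 2)) * Complex.normSq g1 := hns.symm
      _ ≤ Complex.normSq (aa * (a x : ℂ) + bb * (Real.sqrt (1 - a x ^ 2) : ℂ))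
            * (Real.sqrt (1 - p x ^ 2) * Real.sqrt (1 - p x ^ 2)) * 1 :=
          mul_le_mul_of_nonneg_left hN3 (mul_nonneg n1 hQ2)
      _ = Complex.normSq (aa * (a x : ℂ) + bb * (Real.sqrt (1 - a x ^ 2) : ℂ))
            * (Real.sqrt (1 - p x ^ 2) * Real.sqrt (1 - p x ^ 2)) := by ring
      _ ≤ Real.sqrt (1 - p x ^ 2) * Real.sqrt (1 - p x ^ 2) := mul_le_of_le_one_left hQ2 hN1
  nlinarith [hQQ, q0, q0']
lemma inner_self_sub_combo (c d : ℂ) (x : ℤ) :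
    ⟪c • e x 0 - d • e x 1, c • e x 0 - d • e x 1⟫
      = (starRingEnd ℂ) c * c + (starRingEnd ℂ) d * d := by
  simp only [inner_sub_left, inner_sub_right, inner_smul_left, inner_smul_right, inner_ee]
  norm_num
  ring

set_option maxHeartbeats 4000000 in
/-- Given equal `p`'s, the coin parameters agree. -/
lemma a_eq (p a a' : ℤ → ℝ)
    (hp : ∀ x : ℤ, p x ∈ Set.Icc (0 : ℝ) 1)
    (ha : ∀ x : ℤ, a x ∈ Set.Icc (0 : ℝ) 1) (ha' : ∀ x : ℤ, a' x ∈ Set.Icc (0 : ℝ) 1)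
    (V V' W : H ≃ₗᵢ[ℂ] H)
    (hV : IsUprtk p a (fun _ => 0) (fun _ => 0) V)
    (hV' : IsUprtk p a' (fun _ => 0) (fun _ => 0) V')
    (hWsymm : ∀ x : ℤ, ∀ ψ ∈ Hx x, W.symm ψ ∈ Hx x)
    (hE : ∀ ψ : H, V' ψ = W (V (W.symm ψ)))
    (x : ℤ) : a' x = a x := by
  set u' : H := (a' x : ℂ) • e x 0 + (Real.sqrt (1 - a' x ^ 2) : ℂ) • e x 1 with hu'def
  have hu'mem : u' ∈ Hx x :=
    Submodule.add_mem _ (Submodule.smul_mem _ _ (e_mem x 0)) (Submodule.smul_mem _ _ (e_mem x 1))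
  obtain ⟨aa, bb, hφ⟩ := mem_Hx_iff.1 (hWsymm x u' hu'mem)
  obtain ⟨g0, g1, hg⟩ := mem_Hx_iff.1 (hWsymm (x+1) (e (x+1) 1) (e_mem _ _))
  obtain ⟨h0, h1, hh⟩ := mem_Hx_iff.1 (hWsymm x (e x 0) (e_mem x 0))
  set R : ℂ := (a x : ℂ)
  set S : ℂ := (Real.sqrt (1 - a x ^ 2) : ℂ)
  set C : ℂ := aa * R + bb * S with hCdef
  set D : ℂ := aa * S - bb * R with hDdef
  -- E1
  have E1 : V (W.symm u') = (p x : ℂ) • W.symm (e x 0)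
      + (Real.sqrt (1 - p x ^ 2) : ℂ) • W.symm (e (x + 1) 1) := by
    have h := (hV_clean hV' x).1
    rw [hE] at h
    have h2 := congrArg W.symm h
    rw [LinearIsometryEquiv.symm_apply_apply] at h2
    rw [h2, map_add, map_smul, map_smul]
  rw [hφ, V_combo hV ha x aa bb] at E1
  -- norm facts
  have h1n : ⟪W.symm u', W.symm u'⟫ = 1 := by
    rw [LinearIsometryEquiv.inner_map_map, hu'def, inner_self_combo]
    simp only [Complex.conj_ofReal]
    exact rs_sq ha' x
  have hab := normSq_coords hφ h1n
  have hgn := normSq_coords hg (by rw [LinearIsometryEquiv.inner_map_map, inner_ee]; simp)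
  have hhn := normSq_coords hh (by rw [LinearIsometryEquiv.inner_map_map, inner_ee]; simp)
  have hsq : a x ^ 2 + (Real.sqrt (1 - a x ^ 2))^2 = 1 := by
    rw [Real.sq_sqrt (by nlinarith [(ha x).1, (ha x).2])]; ring
  have hcd : Complex.normSq C + Complex.normSq D = 1 := by
    rw [hCdef, hDdef]; rw [rot_normSq aa bb (a x) (Real.sqrt (1 - a x ^ 2)) hsq]; exact hab
  have hrs := rs_sq ha x
  have haa : aa = C * R + D * S := by rw [hCdef, hDdef]; linear_combination (-aa) * hrs
  have hbb : bb = C * S - D * R := by rw [hCdef, hDdef]; linear_combination (-bb) * hrs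
  -- the key representation of a' x
  have hr' : (a' x : ℂ) = (starRingEnd ℂ) h0 * aa + (starRingEnd ℂ) h1 * bb := by
    have he0u' : ⟪e x 0, u'⟫ = (a' x : ℂ) := by
      rw [hu'def]
      simp only [inner_add_right, inner_smul_right, inner_ee]; simp
    calc (a' x : ℂ) = ⟪e x 0, u'⟫ := he0u'.symm
      _ = ⟪W.symm (e x 0), W.symm u'⟫ := (LinearIsometryEquiv.inner_map_map _ _ _).symm
      _ = (starRingEnd ℂ) h0 * aa + (starRingEnd ℂ) h1 * bb := by
          rw [hh, hφ]
          simp only [inner_add_left, inner_add_right, inner_smul_left, inner_smul_right, inner_ee]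
          norm_num
          ring
  have ha'0 := (ha' x).1
  have ha0 := (ha x).1
  rcases eq_or_lt_of_le (Real.sqrt_nonneg (1 - p x ^ 2)) with hq | hq
  · -- q = 0 case : p x = 1
    have hq0 : Real.sqrt (1 - p x ^ 2) = 0 := hq.symm
    have hp1 : p x = 1 := by
      have := Real.sqrt_eq_zero'.1 hq0
      nlinarith [(hp x).1, (hp x).2]
    rw [hq0, hp1] at E1
    simp only [Complex.ofReal_zero, zero_smul, add_zero, Complex.ofReal_one, mul_one] at E1
    rw [hh] at E1
    -- components
    have hne1 : ¬ (x - 1 = x) := by omega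
    have i2 := congrArg (fun z => ⟪e x 0, z⟫) E1
    simp only [inner_add_left, inner_add_right, inner_sub_right, inner_smul_left,
      inner_smul_right, inner_ee, hne1] at i2
    norm_num at i2
    have i3 := congrArg (fun z => ⟪e x 1, z⟫) E1
    simp only [inner_add_left, inner_add_right, inner_sub_right, inner_smul_left,
      inner_smul_right, inner_ee, hne1] at i3
    norm_num at i3
    have hne1' : ¬ (x = x - 1) := by omega
    simp only [hne1'] at i2
    norm_num at i2
    -- now i2 : C = h0 modulo defs; i3 : -(D * p (x-1)) = h1
    have i2' : C = h0 := i2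
    have i3' : -(D * ((p (x-1) : ℝ) : ℂ)) = h1 := i3
    have hhn2 : Complex.normSq C + Complex.normSq D * (p (x-1) * p (x-1)) = 1 := by
      rw [← i2', ← i3'] at hhn
      simpa [Complex.normSq_neg, Complex.normSq_mul, Complex.normSq_ofReal] using hhn
    have key : Complex.normSq D * (1 - p (x-1)^2) = 0 := by nlinarith [hcd, hhn2]
    have hsum : (starRingEnd ℂ) C * C + (starRingEnd ℂ) D * D = 1 := by
      have k1 := Complex.mul_conj C
      have k2 := Complex.mul_conj D
      calc (starRingEnd ℂ) C * C + (starRingEnd ℂ) D * D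
          = C * (starRingEnd ℂ) C + D * (starRingEnd ℂ) D := by ring
        _ = ((Complex.normSq C : ℝ) : ℂ) + ((Complex.normSq D : ℝ) : ℂ) := by rw [k1, k2]
        _ = ((Complex.normSq C + Complex.normSq D : ℝ) : ℂ) := by push_cast; ring
        _ = 1 := by rw [hcd]; norm_num
    rcases mul_eq_zero.1 key with hD0 | hp2
    · have hD : D = 0 := Complex.normSq_eq_zero.1 hD0
      have final : (a' x : ℂ) = R := by
        calc (a' x : ℂ) = (starRingEnd ℂ) h0 * aa + (starRingEnd ℂ) h1 * bb := hr'
          _ = ((starRingEnd ℂ) C * C + (starRingEnd ℂ) D * D) * R := by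
              rw [← i2', ← i3', haa, hbb, hD]
              simp only [map_zero, map_neg, map_mul, mul_zero, zero_mul, add_zero, zero_add,
                neg_zero, sub_zero]
              ring
          _ = R := by rw [hsum]; ring
      exact_mod_cast (show (a' x : ℂ) = ((a x : ℝ) : ℂ) from final)
    · have hp3 : p (x-1) = 1 := by nlinarith [(hp (x-1)).1, (hp (x-1)).2]
      have final : (a' x : ℂ) = R + ((starRingEnd ℂ) C * D - (starRingEnd ℂ) D * C) * S := by
        calc (a' x : ℂ) = (starRingEnd ℂ) h0 * aa + (starRingEnd ℂ) h1 * bb := hr'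
          _ = (starRingEnd ℂ) C * (C * R + D * S)
              - (starRingEnd ℂ) D * (C * S - D * R) := by
              rw [← i2', ← i3', haa, hbb, hp3]
              simp only [map_neg, map_mul, Complex.ofReal_one, mul_one, Complex.conj_ofReal]
              ring
          _ = ((starRingEnd ℂ) C * C + (starRingEnd ℂ) D * D) * R
              + ((starRingEnd ℂ) C * D - (starRingEnd ℂ) D * C) * S := by ring
          _ = R + ((starRingEnd ℂ) C * D - (starRingEnd ℂ) D * C) * S := by rw [hsum]; ring
      have hzre : ((starRingEnd ℂ) C * D - (starRingEnd ℂ) D * C).re = 0 := by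
        have hconj : (starRingEnd ℂ) D * C = (starRingEnd ℂ) ((starRingEnd ℂ) C * D) := by
          rw [map_mul, Complex.conj_conj]; ring
        rw [hconj, Complex.sub_re, Complex.conj_re, sub_self]
      have hre := congrArg Complex.re final
      rw [Complex.add_re, Complex.mul_re, hzre] at hre
      simp only [show R = ((a x : ℝ) : ℂ) from rfl, show S = ((Real.sqrt (1 - a x ^ 2) : ℝ) : ℂ) from rfl,
        Complex.ofReal_re, Complex.ofReal_im] at hre
      simpa using hre
  · have hqne : ((Real.sqrt (1 - p x ^ 2) : ℝ) : ℂ) ≠ 0 := Complex.ofReal_ne_zero.2 (ne_of_gt hq)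
    have hinner := congrArg (fun z => ⟪W.symm (e (x+1) 1), z⟫) E1
    have hne1 : x + 1 ≠ x - 1 := by omega
    have hne2 : x + 1 ≠ x := by omega
    simp only [inner_add_left, inner_add_right, inner_sub_right, inner_smul_left, inner_smul_right,
      LinearIsometryEquiv.inner_map_map] at hinner
    rw [hg] at hinner
    simp only [inner_add_left, inner_add_right, inner_sub_right, inner_smul_left, inner_smul_right,
      inner_ee, hne1, hne2] at hinner
    norm_num at hinner
    have hinner' : C * ((Real.sqrt (1 - p x ^ 2) : ℝ) : ℂ) * (starRingEnd ℂ) g1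
        = ((Real.sqrt (1 - p x ^ 2) : ℝ) : ℂ) := hinner
    have hCg : C * (starRingEnd ℂ) g1 = 1 := by
      have h2 : (C * (starRingEnd ℂ) g1) * ((Real.sqrt (1 - p x ^ 2) : ℝ) : ℂ)
          = 1 * ((Real.sqrt (1 - p x ^ 2) : ℝ) : ℂ) := by
        rw [one_mul]; linear_combination hinner'
      exact mul_right_cancel₀ hqne h2
    have hnsCg := congrArg Complex.normSq hCg
    rw [Complex.normSq_mul, Complex.normSq_conj] at hnsCg
    norm_num at hnsCg
    have hnC : Complex.normSq C = 1 := by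
      have t1 : Complex.normSq g1 ≤ 1 := by
        have := Complex.normSq_nonneg g0; linarith
      have t2 : Complex.normSq C * Complex.normSq g1 ≤ Complex.normSq C * 1 :=
        mul_le_mul_of_nonneg_left t1 (Complex.normSq_nonneg C)
      rw [hnsCg, mul_one] at t2
      have t3 : Complex.normSq C ≤ 1 := by
        have := Complex.normSq_nonneg D; linarith
      linarith
    have hD : D = 0 := by
      have hns0 : Complex.normSq D = 0 := by linarith
      exact Complex.normSq_eq_zero.1 hns0
    -- E2 at x+1
    set v2 : H := (Real.sqrt (1 - a' (x+1) ^ 2) : ℂ) • e (x+1) 0 - (a' (x+1) : ℂ) • e (x+1) 1 with hv2def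
    have hv2mem : v2 ∈ Hx (x+1) :=
      Submodule.sub_mem _ (Submodule.smul_mem _ _ (e_mem _ 0)) (Submodule.smul_mem _ _ (e_mem _ 1))
    obtain ⟨a2, b2, hψ⟩ := mem_Hx_iff.1 (hWsymm (x+1) v2 hv2mem)
    have E2 : V (W.symm v2) = (Real.sqrt (1 - p x ^ 2) : ℂ) • W.symm (e x 0)
        - (p x : ℂ) • W.symm (e (x+1) 1) := by
      have h := (hV_clean hV' (x+1)).2
      simp only [add_sub_cancel_right] at h
      rw [hE] at h
      have h2 := congrArg W.symm h
      rw [LinearIsometryEquiv.symm_apply_apply] at h2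
      rw [h2, map_sub, map_smul, map_smul]
    rw [hψ, V_combo hV ha (x+1) a2 b2] at E2
    simp only [add_sub_cancel_right] at E2
    have hinner2 := congrArg (fun z => ⟪W.symm (e x 0), z⟫) E2
    have hne3 : x ≠ x + 1 := by omega
    have hne4 : x ≠ x + 1 + 1 := by omega
    simp only [inner_add_left, inner_add_right, inner_sub_right, inner_smul_left, inner_smul_right,
      LinearIsometryEquiv.inner_map_map] at hinner2
    rw [hh] at hinner2
    simp only [inner_add_left, inner_add_right, inner_sub_right, inner_smul_left, inner_smul_right,
      inner_ee, hne3, hne4] at hinner2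
    norm_num at hinner2
    have hinner2' : (a2 * (Real.sqrt (1 - a (x+1) ^ 2) : ℂ) - b2 * (a (x+1) : ℂ))
        * ((Real.sqrt (1 - p x ^ 2) : ℝ) : ℂ) * (starRingEnd ℂ) h0
        = ((Real.sqrt (1 - p x ^ 2) : ℝ) : ℂ) := hinner2
    set D2 : ℂ := a2 * (Real.sqrt (1 - a (x+1) ^ 2) : ℂ) - b2 * (a (x+1) : ℂ) with hD2def
    have hDh : D2 * (starRingEnd ℂ) h0 = 1 := by
      have h2 : (D2 * (starRingEnd ℂ) h0) * ((Real.sqrt (1 - p x ^ 2) : ℝ) : ℂ)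
          = 1 * ((Real.sqrt (1 - p x ^ 2) : ℝ) : ℂ) := by
        rw [one_mul]; linear_combination hinner2'
      exact mul_right_cancel₀ hqne h2
    have hv2n := normSq_coords hψ (by
      rw [LinearIsometryEquiv.inner_map_map, hv2def, inner_self_sub_combo]
      simp only [Complex.conj_ofReal]
      linear_combination rs_sq ha' (x+1))
    have hsq2 : a (x+1) ^ 2 + (Real.sqrt (1 - a (x+1) ^ 2))^2 = 1 := by
      rw [Real.sq_sqrt (by nlinarith [(ha (x+1)).1, (ha (x+1)).2])]; ring
    have hcd2 : Complex.normSq (a2 * (a (x+1) : ℂ) + b2 * (Real.sqrt (1 - a (x+1) ^ 2) : ℂ))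
        + Complex.normSq D2 = 1 := by
      rw [hD2def, rot_normSq a2 b2 (a (x+1)) (Real.sqrt (1 - a (x+1) ^ 2)) hsq2]; exact hv2n
    have hnsDh := congrArg Complex.normSq hDh
    rw [Complex.normSq_mul, Complex.normSq_conj] at hnsDh
    norm_num at hnsDh
    have hnh0 : Complex.normSq h0 = 1 := by
      have t1 : Complex.normSq D2 ≤ 1 := by
        have := Complex.normSq_nonneg (a2 * (a (x+1) : ℂ) + b2 * (Real.sqrt (1 - a (x+1) ^ 2) : ℂ))
        linarith
      have t2 : Complex.normSq D2 * Complex.normSq h0 ≤ 1 * Complex.normSq h0 :=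
        mul_le_mul_of_nonneg_right t1 (Complex.normSq_nonneg h0)
      rw [hnsDh, one_mul] at t2
      have t3 : Complex.normSq h0 ≤ 1 := by
        have := Complex.normSq_nonneg h1; linarith
      linarith
    have hh1 : h1 = 0 := by
      have hns0 : Complex.normSq h1 = 0 := by linarith
      exact Complex.normSq_eq_zero.1 hns0
    have final : (a' x : ℂ) = (starRingEnd ℂ) h0 * C * R := by
      rw [hr', hh1, haa, hD]
      simp only [map_zero, zero_mul, add_zero, mul_zero, zero_add]
      ring
    have hnsf := congrArg Complex.normSq final
    rw [Complex.normSq_mul, Complex.normSq_mul, Complex.normSq_conj, hnh0, hnC,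
      Complex.normSq_ofReal, show Complex.normSq R = a x * a x from Complex.normSq_ofReal (a x)]
      at hnsf
    rw [one_mul, one_mul] at hnsf
    nlinarith [hnsf, ha'0, ha0]

lemma e_eq_combo (x : ℤ) (i : Fin 2) :
    (if i = 0 then ((1:ℂ) • e x 0 + (0:ℂ) • e x 1) else ((0:ℂ) • e x 0 + (1:ℂ) • e x 1)) = e x i := by
  fin_cases i <;> simp

theorem suzuki_unitary_equiv_iff' (p p' a a' : ℤ → ℝ)
    (hp : ∀ x : ℤ, p x ∈ Set.Icc (0 : ℝ) 1) (hp' : ∀ x : ℤ, p' x ∈ Set.Icc (0 : ℝ) 1)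
    (ha : ∀ x : ℤ, a x ∈ Set.Icc (0 : ℝ) 1) (ha' : ∀ x : ℤ, a' x ∈ Set.Icc (0 : ℝ) 1)
    (V V' : H ≃ₗᵢ[ℂ] H)
    (hV : IsUprtk p a (fun _ => 0) (fun _ => 0) V)
    (hV' : IsUprtk p' a' (fun _ => 0) (fun _ => 0) V') :
    (∃ W : H ≃ₗᵢ[ℂ] H,
      (∀ x : ℤ, (Hx x).map (W.toLinearEquiv : H →ₗ[ℂ] H) = Hx x) ∧
      V' = (W.symm.trans V).trans W) ↔ (p = p' ∧ a = a') := by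
  constructor
  · rintro ⟨W, hW, hVV'⟩
    have hWfwd : ∀ x : ℤ, ∀ ψ ∈ Hx x, W ψ ∈ Hx x := by
      intro x ψ h
      rw [← hW x]
      exact Submodule.mem_map_of_mem h
    have hWsymm : ∀ x : ℤ, ∀ ψ ∈ Hx x, W.symm ψ ∈ Hx x := by
      intro x ψ h
      rw [← hW x] at h
      obtain ⟨χ, hχ, hWχ⟩ := h
      have hch : W.symm ψ = χ := by
        have hψ : ψ = W χ := by rw [← hWχ]; rfl
        rw [hψ, LinearIsometryEquiv.symm_apply_apply]
      rwa [hch]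
    have hE : ∀ ψ : H, V' ψ = W (V (W.symm ψ)) := by
      intro ψ; rw [hVV']; rfl
    have hE2 : ∀ ψ : H, V ψ = W.symm (V' (W.symm.symm ψ)) := by
      intro ψ
      rw [LinearIsometryEquiv.symm_symm, hE (W ψ), LinearIsometryEquiv.symm_apply_apply,
        LinearIsometryEquiv.symm_apply_apply]
    have hWsymm2 : ∀ x : ℤ, ∀ ψ ∈ Hx x, W.symm.symm ψ ∈ Hx x := by
      intro x ψ h
      rw [LinearIsometryEquiv.symm_symm]
      exact hWfwd x ψ h
    have hq : ∀ x : ℤ, Real.sqrt (1 - p' x ^ 2) = Real.sqrt (1 - p x ^ 2) := fun x =>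
      le_antisymm (qle p a p' a' hp hp' ha ha' V V' W hV hV' hWsymm hE x)
        (qle p' a' p a hp' hp ha' ha V' V W.symm hV' hV hWsymm2 hE2 x)
    have hpeq : p = p' := by
      funext x
      have h1 := congrArg (fun t : ℝ => t ^ 2) (hq x)
      rw [Real.sq_sqrt (by nlinarith [(hp' x).1, (hp' x).2]),
        Real.sq_sqrt (by nlinarith [(hp x).1, (hp x).2])] at h1
      nlinarith [(hp x).1, (hp' x).1, h1]
    have hV'2 : IsUprtk p a' (fun _ => 0) (fun _ => 0) V' := by rwa [hpeq]
    exact ⟨hpeq, funext fun x => (a_eq p a a' hp ha ha' V V' W hV hV'2 hWsymm hE x).symm⟩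
  · rintro ⟨hpe, hae⟩
    subst hpe; subst hae
    refine ⟨LinearIsometryEquiv.refl ℂ H, ?_, ?_⟩
    · intro x
      have hid : ((LinearIsometryEquiv.refl ℂ H).toLinearEquiv : H →ₗ[ℂ] H) = LinearMap.id := rfl
      rw [hid, Submodule.map_id]
    · have agree : ∀ x : ℤ, ∀ i : Fin 2, V' (e x i) = V (e x i) := by
        intro x i
        fin_cases i
        · have h1 := V_combo hV ha x 1 0
          have h2 := V_combo hV' ha x 1 0
          simp only [one_smul, zero_smul, add_zero] at h1 h2
          exact h2.trans h1.symm
        · have h1 := V_combo hV ha x 0 1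
          have h2 := V_combo hV' ha x 0 1
          simp only [one_smul, zero_smul, zero_add] at h1 h2
          exact h2.trans h1.symm
      apply LinearIsometryEquiv.ext
      intro ψ
      have hsum : HasSum (fun z : ℤ × Fin 2 => lp.single 2 z (ψ z)) ψ :=
        lp.hasSum_single (by norm_num) ψ
      have hs1 : HasSum (fun z : ℤ × Fin 2 => (clm V) (lp.single 2 z (ψ z))) ((clm V) ψ) :=
        hsum.mapL (clm V)
      have hs2 : HasSum (fun z : ℤ × Fin 2 => (clm V') (lp.single 2 z (ψ z))) ((clm V') ψ) :=
        hsum.mapL (clm V')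
      have hfun : (fun z : ℤ × Fin 2 => (clm V') (lp.single 2 z (ψ z)))
          = fun z : ℤ × Fin 2 => (clm V) (lp.single 2 z (ψ z)) := by
        funext z
        obtain ⟨x, i⟩ := z
        have hsingle : lp.single 2 (x, i) (ψ (x, i)) = ψ (x, i) • e x i := by
          rw [e, ← lp.single_smul]
          norm_num
        show V' (lp.single 2 (x, i) (ψ (x, i))) = V (lp.single 2 (x, i) (ψ (x, i)))
        rw [hsingle, map_smul, map_smul, agree x i]
      rw [hfun] at hs2
      have : (clm V') ψ = (clm V) ψ := hs2.unique hs1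
      exact this

/-- **Corollary 4.5.** For `p, p′, a, a′ : ℤ → [0,1]`, the
quantum walks `U_{p,a} = U_{p,a,0,0}` and `U_{p′,a′} = U_{p′,a′,0,0}` are
unitarily equivalent iff `p = p′` and `a = a′`. -/
theorem suzuki_unitary_equiv_iff (p p' a a' : ℤ → ℝ)
    (hp : ∀ x : ℤ, p x ∈ Set.Icc (0 : ℝ) 1) (hp' : ∀ x : ℤ, p' x ∈ Set.Icc (0 : ℝ) 1)
    (ha : ∀ x : ℤ, a x ∈ Set.Icc (0 : ℝ) 1) (ha' : ∀ x : ℤ, a' x ∈ Set.Icc (0 : ℝ) 1)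
    (V V' : H ≃ₗᵢ[ℂ] H)
    (hV : IsUprtk p a (fun _ => 0) (fun _ => 0) V)
    (hV' : IsUprtk p' a' (fun _ => 0) (fun _ => 0) V') :
    UnitEquiv V V' ↔ (p = p' ∧ a = a') := by
  exact suzuki_unitary_equiv_iff' p p' a a' hp hp' ha ha' V V' hV hV'
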